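/- arXiv:1912.05203 — 4 statements merged into one kernel-verified Lean document; each statement's English description precedes it below -/
import Mathlib

section
/- Define H(μ,ν) = P^#_μ(ν) / P^#_ν(ν) for partitions μ ⊆ ν and H'(ρ,λ) = (-1)^{|λ|-|ρ|} H(ρ,λ). Assume the combinatorial formula H(μ,ν) = (1/(|ν|-|μ|)!) ∑_{T ∈ SYT(ν/μ)} ψ'_T(α), where the sum is over standard Young tableaux of skew shape ν/μ and ψ'_T(α) = ∏ over the chain of one-box additions in T of the weights ψ'. Then for any partitions ρ ⊊ λ (strict inclusion), ∑_{σ : ρ ⊆ σ ⊆ λ} H'(ρ,σ) H(σ,λ) = 0. -/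
open Finset

/-- Chains `ρ = f 0 → f 1 → ⋯ → f n = λ` of one-box additions (`cov`), encoding
standard Young tableaux of the skew shape `λ/ρ`. -/
def chainSet {P : Type*} [Fintype P] [DecidableEq P] (cov : P → P → Prop)
    [DecidableRel cov] (n : ℕ) (ρ lam : P) : Finset (Fin (n + 1) → P) :=
  Finset.univ.filter
    (fun f => f 0 = ρ ∧ f (Fin.last n) = lam ∧ ∀ i : Fin n, cov (f i.castSucc) (f i.succ))

/-- The weight `ψ'_T(α)` of a tableau/chain: product of the one-step weights. -/
def chainWeight {P F : Type*} [CommRing F] (ψ : P → P → F) {n : ℕ} (f : Fin (n + 1) → P) : F :=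
  ∏ i : Fin n, ψ (f i.castSucc) (f i.succ)

/-- `H(μ,ν) = (1/(|ν|-|μ|)!) ∑_{T ∈ SYT(ν/μ)} ψ'_T(α)`. -/
def Hfun {P F : Type*} [Fintype P] [DecidableEq P] [Field F] (cov : P → P → Prop)
    [DecidableRel cov] (ψ : P → P → F) (sz : P → ℕ) (μ ν : P) : F :=
  ((Nat.factorial (sz ν - sz μ) : F))⁻¹ *
    ∑ f ∈ chainSet cov (sz ν - sz μ) μ ν, chainWeight ψ f

/-- `H'(μ,ν) = (-1)^{|ν|-|μ|} H(μ,ν)`. -/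
def Hfun' {P F : Type*} [Fintype P] [DecidableEq P] [Field F] (cov : P → P → Prop)
    [DecidableRel cov] (ψ : P → P → F) (sz : P → ℕ) (μ ν : P) : F :=
  (-1 : F) ^ (sz ν - sz μ) * Hfun cov ψ sz μ ν

section Aux

variable {P F : Type*} [Fintype P] [DecidableEq P] [CommRing F]

def joinChain {k m : ℕ} (f1 : Fin (k + 1) → P) (f2 : Fin (m + 1) → P) :
    Fin (k + m + 1) → P :=
  fun i => if h : (i : ℕ) < k + 1 then f1 ⟨i, h⟩ else f2 ⟨(i : ℕ) - k, by omega⟩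

lemma joinChain_left {k m : ℕ} (f1 : Fin (k + 1) → P) (f2 : Fin (m + 1) → P)
    {i : ℕ} (hi : i < k + 1) (hi' : i < k + m + 1) :
    joinChain f1 f2 ⟨i, hi'⟩ = f1 ⟨i, hi⟩ := dif_pos hi

lemma joinChain_right {k m : ℕ} {f1 : Fin (k + 1) → P} {f2 : Fin (m + 1) → P}
    (h0 : f1 (Fin.last k) = f2 0)
    {j : ℕ} (hj : j < m + 1) (hj' : k + j < k + m + 1) :
    joinChain f1 f2 ⟨k + j, hj'⟩ = f2 ⟨j, hj⟩ := by
  unfold joinChain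
  by_cases hc : k + j < k + 1
  · have hj0 : j = 0 := by omega
    subst hj0
    rw [dif_pos hc]
    have h1 : (⟨k + 0, by omega⟩ : Fin (k + 1)) = Fin.last k := by
      apply Fin.ext; simp [Fin.last]
    rw [h1, h0]
    congr 1
  · rw [dif_neg hc]
    congr 1
    apply Fin.ext
    simp

lemma chainWeight_joinChain (ψ : P → P → F) {k m : ℕ}
    {f1 : Fin (k + 1) → P} {f2 : Fin (m + 1) → P} (h0 : f1 (Fin.last k) = f2 0) :
    chainWeight ψ (joinChain f1 f2) = chainWeight ψ f1 * chainWeight ψ f2 := by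
  unfold chainWeight
  rw [Fin.prod_univ_add]
  congr 1
  · apply Finset.prod_congr rfl
    intro i _
    have e1 : ((Fin.castAdd m i).castSucc : Fin (k + m + 1)) = ⟨(i : ℕ), by omega⟩ := by
      apply Fin.ext; simp
    have e2 : ((Fin.castAdd m i).succ : Fin (k + m + 1)) = ⟨(i : ℕ) + 1, by omega⟩ := by
      apply Fin.ext; simp
    rw [e1, e2, joinChain_left f1 f2 (Nat.lt_succ_of_lt i.isLt),
      joinChain_left f1 f2 (Nat.succ_lt_succ i.isLt)]
    rfl
  · apply Finset.prod_congr rfl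
    intro j _
    have e1 : ((Fin.natAdd k j).castSucc : Fin (k + m + 1)) = ⟨k + (j : ℕ), by omega⟩ := by
      apply Fin.ext; simp
    have e2 : ((Fin.natAdd k j).succ : Fin (k + m + 1)) = ⟨k + ((j : ℕ) + 1), by omega⟩ := by
      apply Fin.ext; simp; omega
    rw [e1, e2, joinChain_right h0 (Nat.lt_succ_of_lt j.isLt),
      joinChain_right h0 (Nat.succ_lt_succ j.isLt)]
    rfl

end Aux

set_option linter.unusedSectionVars false
set_option maxHeartbeats 1000000

lemma mem_chainSet {P : Type*} [Fintype P] [DecidableEq P] {cov : P → P → Prop}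
    [DecidableRel cov] {n : ℕ} {μ ν : P} {f : Fin (n + 1) → P} :
    f ∈ chainSet cov n μ ν ↔
      f 0 = μ ∧ f (Fin.last n) = ν ∧ ∀ i : Fin n, cov (f i.castSucc) (f i.succ) := by
  simp [chainSet]

lemma join_sum {P F : Type*} [Fintype P] [DecidableEq P] [CommRing F]
    (cov : P → P → Prop) [DecidableRel cov] (ψ : P → P → F)
    (k m : ℕ) (μ σ ν : P) :
    (∑ f1 ∈ chainSet cov k μ σ, chainWeight ψ f1) *
      (∑ f2 ∈ chainSet cov m σ ν, chainWeight ψ f2) =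
    ∑ f ∈ (chainSet cov (k + m) μ ν).filter
        (fun f => f ⟨k, by omega⟩ = σ), chainWeight ψ f := by
  rw [Finset.sum_mul_sum, ← Finset.sum_product']
  refine Finset.sum_nbij' (fun p => joinChain p.1 p.2)
    (fun f => (fun i => f ⟨i, by omega⟩, fun j => f ⟨k + j, by omega⟩)) ?_ ?_ ?_ ?_ ?_
  · rintro ⟨f1, f2⟩ hp
    rw [Finset.mem_product] at hp
    dsimp only at hp ⊢
    obtain ⟨h1, h2⟩ := hp
    rw [mem_chainSet] at h1 h2
    have h0 : f1 (Fin.last k) = f2 0 := by rw [h1.2.1, h2.1]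
    rw [Finset.mem_filter, mem_chainSet]
    refine ⟨⟨?_, ?_, ?_⟩, ?_⟩
    · have : (0 : Fin (k + m + 1)) = ⟨(0 : ℕ), by omega⟩ := rfl
      rw [this, joinChain_left f1 f2 (by omega)]
      exact h1.1
    · have : (Fin.last (k + m) : Fin (k + m + 1)) = ⟨k + m, by omega⟩ := rfl
      rw [this, joinChain_right h0 (by omega)]
      exact h2.2.1
    · intro i
      by_cases hik : (i : ℕ) < k
      · have e1 : (i.castSucc : Fin (k + m + 1)) = ⟨(i : ℕ), by omega⟩ := rfl
        have e2 : (i.succ : Fin (k + m + 1)) = ⟨(i : ℕ) + 1, by omega⟩ := rfl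
        rw [e1, e2, joinChain_left f1 f2 (by omega), joinChain_left f1 f2 (by omega)]
        exact h1.2.2 ⟨(i : ℕ), hik⟩
      · set j : ℕ := (i : ℕ) - k with hj
        have hjm : j < m := by omega
        have e1 : (i.castSucc : Fin (k + m + 1)) = ⟨k + j, by omega⟩ := by
          apply Fin.ext; simp; omega
        have e2 : (i.succ : Fin (k + m + 1)) = ⟨k + (j + 1), by omega⟩ := by
          apply Fin.ext; simp; omega
        rw [e1, e2, joinChain_right h0 (by omega), joinChain_right h0 (by omega)]
        exact h2.2.2 ⟨j, hjm⟩
    · rw [show (⟨k, by omega⟩ : Fin (k + m + 1)) = ⟨k + 0, by omega⟩ from rfl,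
        joinChain_right h0 (by omega)]
      exact h2.1
  · intro f hf
    rw [Finset.mem_filter, mem_chainSet] at hf
    obtain ⟨⟨hf0, hfl, hfc⟩, hfk⟩ := hf
    rw [Finset.mem_product, mem_chainSet, mem_chainSet]
    dsimp only
    refine ⟨⟨hf0, hfk, ?_⟩, ⟨hfk, ?_, ?_⟩⟩
    · intro i
      have e1 : (⟨(i.castSucc : ℕ), by omega⟩ : Fin (k + m + 1))
          = ((⟨(i : ℕ), by omega⟩ : Fin (k + m)).castSucc) := rfl
      have e2 : (⟨(i.succ : ℕ), by omega⟩ : Fin (k + m + 1))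
          = ((⟨(i : ℕ), by omega⟩ : Fin (k + m)).succ) := rfl
      exact e1 ▸ e2 ▸ hfc ⟨(i : ℕ), by omega⟩
    · rw [show (⟨k + (Fin.last m : ℕ), by omega⟩ : Fin (k + m + 1)) = Fin.last (k + m) from
        (by apply Fin.ext; simp [Fin.last])]
      exact hfl
    · intro j
      have e1 : (⟨k + (j.castSucc : ℕ), by omega⟩ : Fin (k + m + 1))
          = ((⟨k + (j : ℕ), by omega⟩ : Fin (k + m)).castSucc) := rfl
      have e2 : (⟨k + (j.succ : ℕ), by omega⟩ : Fin (k + m + 1))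
          = ((⟨k + (j : ℕ), by omega⟩ : Fin (k + m)).succ) := by
        apply Fin.ext; simp; omega
      exact e1 ▸ e2 ▸ hfc ⟨k + (j : ℕ), by omega⟩
  · rintro ⟨f1, f2⟩ hp
    rw [Finset.mem_product] at hp
    dsimp only at hp ⊢
    obtain ⟨h1, h2⟩ := hp
    rw [mem_chainSet] at h1 h2
    have h0 : f1 (Fin.last k) = f2 0 := by rw [h1.2.1, h2.1]
    simp only [Prod.mk.injEq]
    constructor
    · funext i
      rw [joinChain_left f1 f2 (by omega)]
    · funext j
      rw [joinChain_right h0 (by omega)]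
  · intro f hf
    dsimp only
    funext i
    by_cases hik : (i : ℕ) < k + 1
    · rw [show i = (⟨(i : ℕ), i.isLt⟩ : Fin (k + m + 1)) from rfl,
        joinChain_left _ _ hik]
    · have h0 : (fun i : Fin (k + 1) => f ⟨(i : ℕ), by omega⟩) (Fin.last k)
          = (fun j : Fin (m + 1) => f ⟨k + (j : ℕ), by omega⟩) 0 := by
        dsimp only
        exact congrArg f (Fin.ext (by simp))
      rw [show i = (⟨k + ((i : ℕ) - k), by omega⟩ : Fin (k + m + 1)) from
        (Fin.ext (by simp; omega)), joinChain_right h0 (by omega)]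
  · rintro ⟨f1, f2⟩ hp
    rw [Finset.mem_product] at hp
    dsimp only at hp ⊢
    obtain ⟨h1, h2⟩ := hp
    rw [mem_chainSet] at h1 h2
    have h0 : f1 (Fin.last k) = f2 0 := by rw [h1.2.1, h2.1]
    exact (chainWeight_joinChain ψ h0).symm

lemma chain_sz {P : Type*} {cov : P → P → Prop} (sz : P → ℕ)
    (hcov_sz : ∀ a b, cov a b → sz b = sz a + 1)
    {n : ℕ} {f : Fin (n + 1) → P}
    (hc : ∀ i : Fin n, cov (f i.castSucc) (f i.succ)) :
    ∀ k, ∀ hk : k < n + 1, sz (f ⟨k, hk⟩) = sz (f 0) + k := by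
  intro k
  induction k with
  | zero => intro hk; rfl
  | succ k ih =>
    intro hk
    have hkn : k < n := by omega
    have hstep := hcov_sz _ _ (hc ⟨k, hkn⟩)
    have e1 : ((⟨k, hkn⟩ : Fin n).succ) = (⟨k + 1, hk⟩ : Fin (n + 1)) := rfl
    have e2 : ((⟨k, hkn⟩ : Fin n).castSucc) = (⟨k, by omega⟩ : Fin (n + 1)) := rfl
    rw [e1, e2] at hstep
    rw [hstep, ih (by omega)]
    omega

lemma chain_mono {P : Type*} [Preorder P] {cov : P → P → Prop}
    (hcov_le : ∀ a b, cov a b → a ≤ b)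
    {n : ℕ} {f : Fin (n + 1) → P}
    (hc : ∀ i : Fin n, cov (f i.castSucc) (f i.succ)) :
    ∀ d a, ∀ h : a + d < n + 1, f ⟨a, by omega⟩ ≤ f ⟨a + d, h⟩ := by
  intro d
  induction d with
  | zero => intro a h; exact le_refl _
  | succ d ih =>
    intro a h
    have h1 : a + d < n := by omega
    exact le_trans (ih a (by omega)) (hcov_le _ _ (hc ⟨a + d, h1⟩))

lemma alt_sum {F : Type*} [Field F] [CharZero F] {n : ℕ} (hn : n ≠ 0) :
    ∑ k ∈ Finset.range (n + 1),
      (-1 : F) ^ k * ((Nat.factorial k : F)⁻¹ * (Nat.factorial (n - k) : F)⁻¹) = 0 := by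
  have key : ∀ k ∈ Finset.range (n + 1),
      (-1 : F) ^ k * ((Nat.factorial k : F)⁻¹ * (Nat.factorial (n - k) : F)⁻¹)
      = (Nat.factorial n : F)⁻¹ * ((-1 : F) ^ k * (n.choose k : F)) := by
    intro k hk
    rw [Finset.mem_range] at hk
    have hkn : k ≤ n := by omega
    have hnat := Nat.choose_mul_factorial_mul_factorial hkn
    have hcast : (n.choose k : F) * (Nat.factorial k : F) * (Nat.factorial (n - k) : F)
        = (Nat.factorial n : F) := by exact_mod_cast congrArg (Nat.cast : ℕ → F) hnat
    have h1 : (Nat.factorial k : F) ≠ 0 := Nat.cast_ne_zero.2 (Nat.factorial_ne_zero k)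
    have h2 : (Nat.factorial (n - k) : F) ≠ 0 := Nat.cast_ne_zero.2 (Nat.factorial_ne_zero _)
    have h3 : (Nat.factorial n : F) ≠ 0 := Nat.cast_ne_zero.2 (Nat.factorial_ne_zero n)
    field_simp
    rw [← hcast]
    ring
  rw [Finset.sum_congr rfl key, ← Finset.mul_sum]
  have hz : ∑ k ∈ Finset.range (n + 1), (-1 : F) ^ k * (n.choose k : F) = 0 := by
    have := Int.alternating_sum_range_choose_of_ne hn
    have : ((∑ i ∈ Finset.range (n + 1), (-1 : ℤ) ^ i * (n.choose i : ℤ) : ℤ) : F) = ((0 : ℤ) : F) := by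
      rw [this]
    rw [Int.cast_sum] at this
    simpa using this
  rw [hz, mul_zero]

lemma join_sum' {P F : Type*} [Fintype P] [DecidableEq P] [CommRing F]
    (cov : P → P → Prop) [DecidableRel cov] (ψ : P → P → F)
    (k m n : ℕ) (hkm : k + m = n) (μ σ ν : P) :
    (∑ f1 ∈ chainSet cov k μ σ, chainWeight ψ f1) *
      (∑ f2 ∈ chainSet cov m σ ν, chainWeight ψ f2) =
    ∑ f ∈ (chainSet cov n μ ν).filter
        (fun f => f ⟨min k n, by omega⟩ = σ), chainWeight ψ f := by
  subst hkm
  rw [join_sum cov ψ k m μ σ ν]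
  have e : (⟨min k (k + m), by omega⟩ : Fin (k + m + 1)) = ⟨k, by omega⟩ :=
    Fin.ext (by simp)
  rw [e]


/-- The orthogonality relation: for partitions `ρ ⊊ λ`,
`∑_{σ : ρ ⊆ σ ⊆ λ} H'(ρ,σ) H(σ,λ) = 0`. -/
theorem sum_H'_H_eq_zero {P F : Type*} [Fintype P] [DecidableEq P] [PartialOrder P]
    [DecidableRel ((· ≤ ·) : P → P → Prop)] [Field F] [CharZero F]
    (cov : P → P → Prop) [DecidableRel cov] (ψ : P → P → F) (sz : P → ℕ)
    (hcov_sz : ∀ a b, cov a b → sz b = sz a + 1)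
    (hcov_le : ∀ a b, cov a b → a ≤ b)
    (hstrict : StrictMono sz)
    (ρ lam : P) (h : ρ < lam) :
    ∑ σ ∈ Finset.univ.filter (fun σ => ρ ≤ σ ∧ σ ≤ lam),
      Hfun' cov ψ sz ρ σ * Hfun cov ψ sz σ lam = 0 := by
  classical
  have hrl : sz ρ < sz lam := hstrict h
  set n := sz lam - sz ρ with hn
  have hn0 : n ≠ 0 := by omega
  set S := Finset.univ.filter (fun σ => ρ ≤ σ ∧ σ ≤ lam) with hS
  set C := chainSet cov n ρ lam with hC
  -- step 1: each term is a constant times a sum over full chains with a marked cut point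
  have step1 : ∑ σ ∈ S, Hfun' cov ψ sz ρ σ * Hfun cov ψ sz σ lam
      = ∑ σ ∈ S, ∑ f ∈ C.filter (fun f => f ⟨min (sz σ - sz ρ) n, by omega⟩ = σ),
          ((-1 : F) ^ (sz σ - sz ρ) * ((Nat.factorial (sz σ - sz ρ) : F)⁻¹ *
            (Nat.factorial (sz lam - sz σ) : F)⁻¹)) * chainWeight ψ f := by
    apply Finset.sum_congr rfl
    intro σ hσ
    rw [hS, Finset.mem_filter] at hσ
    obtain ⟨-, h1, h2⟩ := hσ
    have hk : sz ρ ≤ sz σ := hstrict.monotone h1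
    have hm : sz σ ≤ sz lam := hstrict.monotone h2
    have hkm : (sz σ - sz ρ) + (sz lam - sz σ) = n := by omega
    rw [← Finset.mul_sum, ← join_sum' cov ψ _ _ n hkm ρ σ lam]
    rw [Hfun', Hfun, Hfun]
    ring
  rw [step1]
  -- step 2: exchange sums and absorb the filter into an indicator
  have step2 : ∀ σ ∈ S, ∑ f ∈ C.filter (fun f => f ⟨min (sz σ - sz ρ) n, by omega⟩ = σ),
          ((-1 : F) ^ (sz σ - sz ρ) * ((Nat.factorial (sz σ - sz ρ) : F)⁻¹ *
            (Nat.factorial (sz lam - sz σ) : F)⁻¹)) * chainWeight ψ f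
      = ∑ f ∈ C, if f ⟨min (sz σ - sz ρ) n, by omega⟩ = σ then
          ((-1 : F) ^ (sz σ - sz ρ) * ((Nat.factorial (sz σ - sz ρ) : F)⁻¹ *
            (Nat.factorial (sz lam - sz σ) : F)⁻¹)) * chainWeight ψ f else 0 := by
    intro σ _
    rw [Finset.sum_filter]
  rw [Finset.sum_congr rfl step2, Finset.sum_comm]
  -- step 3: for each chain f, the inner sum over σ reindexes to k ∈ range (n+1)
  have step3 : ∀ f ∈ C,
      (∑ σ ∈ S, if f ⟨min (sz σ - sz ρ) n, by omega⟩ = σ then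
          ((-1 : F) ^ (sz σ - sz ρ) * ((Nat.factorial (sz σ - sz ρ) : F)⁻¹ *
            (Nat.factorial (sz lam - sz σ) : F)⁻¹)) * chainWeight ψ f else 0) = 0 := by
    intro f hf
    rw [hC, mem_chainSet] at hf
    obtain ⟨hf0, hfl, hfc⟩ := hf
    have szf : ∀ k, ∀ hk : k < n + 1, sz (f ⟨k, hk⟩) = sz ρ + k := by
      intro k hk
      rw [chain_sz sz hcov_sz hfc k hk, hf0]
    have lef1 : ∀ k, ∀ hk : k < n + 1, ρ ≤ f ⟨k, hk⟩ := by
      intro k hk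
      have := chain_mono hcov_le hfc k 0 (by omega)
      rw [show (⟨0 + k, by omega⟩ : Fin (n + 1)) = ⟨k, hk⟩ from
        Fin.ext (by simp only [Fin.val_mk]; omega)] at this
      rw [← hf0]
      exact this
    have lef2 : ∀ k, ∀ hk : k < n + 1, f ⟨k, hk⟩ ≤ lam := by
      intro k hk
      have := chain_mono hcov_le hfc (n - k) k (by omega)
      rw [show (⟨k + (n - k), by omega⟩ : Fin (n + 1)) = Fin.last n from
        Fin.ext (by simp only [Fin.val_mk, Fin.val_last]; omega)] at this
      rw [← hfl]
      exact this
    rw [← Finset.sum_filter]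
    have reindex : (∑ σ ∈ S.filter (fun σ => f ⟨min (sz σ - sz ρ) n, by omega⟩ = σ),
          ((-1 : F) ^ (sz σ - sz ρ) * ((Nat.factorial (sz σ - sz ρ) : F)⁻¹ *
            (Nat.factorial (sz lam - sz σ) : F)⁻¹)) * chainWeight ψ f)
        = ∑ k ∈ Finset.range (n + 1),
          ((-1 : F) ^ k * ((Nat.factorial k : F)⁻¹ * (Nat.factorial (n - k) : F)⁻¹)) *
            chainWeight ψ f := by
      refine Finset.sum_nbij' (fun σ => sz σ - sz ρ) (fun k => f ⟨min k n, by omega⟩)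
        ?_ ?_ ?_ ?_ ?_
      · intro σ hσ
        rw [Finset.mem_filter, hS, Finset.mem_filter] at hσ
        have hm : sz σ ≤ sz lam := hstrict.monotone hσ.1.2.2
        rw [Finset.mem_range]
        show sz σ - sz ρ < n + 1
        omega
      · intro k hk
        rw [Finset.mem_range] at hk
        refine Finset.mem_filter.2 ⟨?_, ?_⟩
        · rw [hS, Finset.mem_filter]
          exact ⟨Finset.mem_univ _, lef1 _ _, lef2 _ _⟩
        · apply congrArg f
          apply Fin.ext
          simp only [Fin.val_mk]
          have hsz := szf (min k n) (Nat.lt_succ_of_le (Nat.min_le_right k n))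
          rw [hsz]
          omega
      · intro σ hσ
        exact (Finset.mem_filter.1 hσ).2
      · intro k hk
        rw [Finset.mem_range] at hk
        show sz (f ⟨min k n, by omega⟩) - sz ρ = k
        rw [szf (min k n) (Nat.lt_succ_of_le (Nat.min_le_right k n))]
        omega
      · intro σ hσ
        rw [Finset.mem_filter, hS, Finset.mem_filter] at hσ
        have hk : sz ρ ≤ sz σ := hstrict.monotone hσ.1.2.1
        have hm : sz σ ≤ sz lam := hstrict.monotone hσ.1.2.2
        rw [show sz lam - sz σ = n - (sz σ - sz ρ) from by omega]
    rw [reindex, ← Finset.sum_mul, alt_sum hn0, zero_mul]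
  rw [Finset.sum_congr rfl step3, Finset.sum_const, smul_zero]
end

section
/- Fix a real α > 0, a partition λ, and a reverse semistandard Young tableau T of shape μ with entries in {1,…,n} (entries weakly decreasing along rows and strictly decreasing down columns). If for some box s = (i,j) of μ we have λ_{T(i,j)} − (j−1) + (i−1)/α < 0, then there exists a box s' = (1, j') in the first row of μ with 1 ≤ j' ≤ j such that λ_{T(1,j')} − (j'−1) + 0/α = 0, i.e., λ_{T(1,j')} = j'−1. -/
/-- Discrete intermediate value: if `g 1 ≥ 0`, `g j < 0`, and `g` drops by at most `1`
at each step (`g k ≤ g (k+1) + 1`), then `g` hits `0` somewhere in `[1, j]`. -/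
lemma discrete_ivt (g : ℕ → ℤ) (j : ℕ) (hj : 1 ≤ j) (h1 : 0 ≤ g 1) (hjneg : g j < 0)
    (hstep : ∀ k, 1 ≤ k → k < j → g k ≤ g (k + 1) + 1) :
    ∃ k, 1 ≤ k ∧ k ≤ j ∧ g k = 0 := by
  by_contra h
  push_neg at h
  have key : ∀ k, 1 ≤ k → k ≤ j → 0 ≤ g k := by
    intro k
    induction k with
    | zero => omega
    | succ m ih =>
      intro h1m hmj
      rcases Nat.eq_or_lt_of_le h1m with heq | hlt
      · rw [← heq]; exact h1
      · have hm1 : 1 ≤ m := by omega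
        have hmj' : m ≤ j := by omega
        have hgm : 0 ≤ g m := ih hm1 hmj'
        have hne : g m ≠ 0 := h m hm1 hmj'
        have := hstep m hm1 (by omega)
        omega
  have := key j hj le_rfl
  omega

/-- The intermediate-value lemma for reverse semistandard tableaux evaluated at a
partition: if for some box `(i,j)` of `μ` the factor
`λ_{T(i,j)} − (j−1) + (i−1)/α` is negative, then some box `(1,j')` of the first row
with `j' ≤ j` yields a zero factor, i.e. `λ_{T(1,j')} = j'−1`.

Boxes are indexed starting from `1`: box `(i,j)` belongs to `μ` iff `1 ≤ j ≤ μ i`.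
The tableau `T` has entries in `{1,…,n}`, weakly decreasing along rows and strictly
decreasing down columns; `λ` and `μ` are partitions (weakly decreasing on positive
indices, with nonnegative integer values). -/
theorem exists_zero_factor_in_first_row (α : ℝ) (hα : 0 < α) (n : ℕ)
    (μ lam : ℕ → ℕ)
    (hμ : ∀ k l, 1 ≤ k → k ≤ l → μ l ≤ μ k)
    (hlam : ∀ k l, 1 ≤ k → k ≤ l → lam l ≤ lam k)
    (T : ℕ × ℕ → ℕ)
    (hTrange : ∀ i j, 1 ≤ i → 1 ≤ j → j ≤ μ i → 1 ≤ T (i, j) ∧ T (i, j) ≤ n)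
    (hTrow : ∀ i j, 1 ≤ i → 1 ≤ j → j + 1 ≤ μ i → T (i, j + 1) ≤ T (i, j))
    (hTcol : ∀ i j, 1 ≤ i → 1 ≤ j → j ≤ μ (i + 1) → T (i + 1, j) < T (i, j))
    (i j : ℕ) (hi : 1 ≤ i) (hj : 1 ≤ j) (hbox : j ≤ μ i)
    (hneg : (lam (T (i, j)) : ℝ) - ((j : ℝ) - 1) + ((i : ℝ) - 1) / α < 0) :
    ∃ j', 1 ≤ j' ∧ j' ≤ j ∧ (lam (T (1, j')) : ℝ) = (j' : ℝ) - 1 := by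
  -- boxes (1, k) for k ≤ j are in μ
  have hμ1 : ∀ k, 1 ≤ k → k ≤ j → k ≤ μ 1 := fun k h1k hkj =>
    le_trans (le_trans hkj hbox) (hμ 1 i le_rfl hi)
  -- column: T (i', j) ≤ T (1, j) for all 1 ≤ i' with j ≤ μ i'
  have hcol : ∀ i', 1 ≤ i' → j ≤ μ i' → T (i', j) ≤ T (1, j) := by
    intro i'
    induction i' with
    | zero => omega
    | succ m ih =>
      intro _ hjm
      rcases Nat.eq_or_lt_of_le (show 1 ≤ m + 1 by omega) with heq | hlt
      · rw [← heq]
      · have hm1 : 1 ≤ m := by omega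
        have hjm' : j ≤ μ m := le_trans hjm (hμ m (m+1) hm1 (by omega))
        exact le_trans (le_of_lt (hTcol m j hm1 hj hjm)) (ih hm1 hjm')
  have hij1 : T (i, j) ≤ T (1, j) := hcol i hi hbox
  have hT1pos : ∀ k, 1 ≤ k → k ≤ j → 1 ≤ T (1, k) := fun k h1k hkj =>
    (hTrange 1 k le_rfl h1k (hμ1 k h1k hkj)).1
  -- λ at (1, j) is ≤ λ at (i, j)
  have hTijpos : 1 ≤ T (i, j) := (hTrange i j hi hj hbox).1
  have hlam1j : lam (T (1, j)) ≤ lam (T (i, j)) := hlam (T (i, j)) (T (1, j)) hTijpos hij1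
  -- the negative-factor hypothesis gives lam (T (i,j)) + 1 < j (in ℕ)
  have hia : (0:ℝ) ≤ ((i : ℝ) - 1) / α := by
    apply div_nonneg _ (le_of_lt hα)
    have : (1:ℝ) ≤ (i:ℝ) := by exact_mod_cast hi
    linarith
  have hlt : (lam (T (i, j)) : ℝ) + 1 < (j : ℝ) := by linarith
  have hltn : lam (T (i, j)) + 1 < j := by exact_mod_cast hlt
  -- apply the discrete IVT to g k = lam (T (1, k)) + 1 - k
  set g : ℕ → ℤ := fun k => (lam (T (1, k)) : ℤ) + 1 - k with hg
  have h1 : 0 ≤ g 1 := by simp [hg]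
  have hjneg : g j < 0 := by
    simp only [hg]
    have : (lam (T (1, j)) : ℤ) ≤ (lam (T (i, j)) : ℤ) := by exact_mod_cast hlam1j
    omega
  have hstep : ∀ k, 1 ≤ k → k < j → g k ≤ g (k + 1) + 1 := by
    intro k h1k hkj
    have hrow : T (1, k + 1) ≤ T (1, k) := hTrow 1 k le_rfl h1k (hμ1 (k+1) (by omega) (by omega))
    have hpos : 1 ≤ T (1, k + 1) := hT1pos (k+1) (by omega) (by omega)
    have : lam (T (1, k)) ≤ lam (T (1, k + 1)) := hlam (T (1, k + 1)) (T (1, k)) hpos hrow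
    simp only [hg]
    push_cast
    omega
  obtain ⟨k, hk1, hkj, hk0⟩ := discrete_ivt g j hj h1 hjneg hstep
  refine ⟨k, hk1, hkj, ?_⟩
  simp only [hg] at hk0
  have : (lam (T (1, k)) : ℤ) = (k : ℤ) - 1 := by omega
  have := congrArg (fun z : ℤ => (z : ℝ)) this
  push_cast at this
  linarith
end

section
/- Fix a real α > 0, a partition μ with at most n rows, and a partition λ. Then ∑_{T ∈ RSSYT(μ,n)} ψ_T(α) · ∏_{s=(i,j) ∈ μ} (λ_{T(s)} − (j−1) + (i−1)/α) ≥ 0, where ψ_T(α) ≥ 0 for all T. In particular, P^#_μ(λ) ≥ 0 for α > 0. -/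
open Finset

/-- The boxes of the Young diagram of a partition `μ` with at most `n` rows, indexed
starting from `1`: box `(i,j)` with `1 ≤ i ≤ n` and `1 ≤ j ≤ μ i`. -/
def youngBoxes (μ : ℕ → ℕ) (n : ℕ) : Finset (ℕ × ℕ) :=
  (Finset.Icc 1 n ×ˢ Finset.Icc 1 (μ 1)).filter (fun p => p.2 ≤ μ p.1)

/-- Nonnegativity of `P^#_μ(λ)` for `α > 0`: every summand of the combinatorial formula
`P^#_μ(λ) = ∑_{T ∈ RSSYT(μ,n)} ψ_T(α) ∏_{(i,j) ∈ μ} (λ_{T(i,j)} − (j−1) + (i−1)/α)`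
is nonnegative, hence the whole sum is. Here `RSSYT` is the (finite) set of reverse
semistandard tableaux of shape `μ` with entries in `{1,…,n}` (weakly decreasing along
rows, strictly decreasing down columns), and `ψ T = ψ_T(α) ≥ 0`. -/
theorem shifted_jack_eval_nonneg (α : ℝ) (hα : 0 < α) (n : ℕ)
    (μ lam : ℕ → ℕ)
    (hμrows : ∀ k, n < k → μ k = 0)
    (hμ : ∀ k l, 1 ≤ k → k ≤ l → μ l ≤ μ k)
    (hlam : ∀ k l, 1 ≤ k → k ≤ l → lam l ≤ lam k)
    (RSSYT : Finset ((ℕ × ℕ) → ℕ))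
    (hT : ∀ T ∈ RSSYT,
      (∀ i j, 1 ≤ i → 1 ≤ j → j ≤ μ i → 1 ≤ T (i, j) ∧ T (i, j) ≤ n) ∧
      (∀ i j, 1 ≤ i → 1 ≤ j → j + 1 ≤ μ i → T (i, j + 1) ≤ T (i, j)) ∧
      (∀ i j, 1 ≤ i → 1 ≤ j → j ≤ μ (i + 1) → T (i + 1, j) < T (i, j)))
    (ψ : ((ℕ × ℕ) → ℕ) → ℝ) (hψ : ∀ T ∈ RSSYT, 0 ≤ ψ T) :
    0 ≤ ∑ T ∈ RSSYT, ψ T *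
      ∏ s ∈ youngBoxes μ n,
        ((lam (T s) : ℝ) - ((s.2 : ℝ) - 1) + ((s.1 : ℝ) - 1) / α) := by
  apply Finset.sum_nonneg
  intro T hTmem
  obtain ⟨h1, h2, h3⟩ := hT T hTmem
  apply mul_nonneg (hψ T hTmem)
  set f : ℕ × ℕ → ℝ :=
    fun s => ((lam (T s) : ℝ) - ((s.2 : ℝ) - 1) + ((s.1 : ℝ) - 1) / α) with hf
  by_cases hall : ∀ s ∈ youngBoxes μ n, 0 ≤ f s
  · exact Finset.prod_nonneg hall
  · push_neg at hall
    obtain ⟨s, hs, hneg⟩ := hall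
    simp only [youngBoxes, Finset.mem_filter, Finset.mem_product, Finset.mem_Icc] at hs
    obtain ⟨⟨⟨hi1, hin⟩, hj1, hjμ1⟩, hjμ⟩ := hs
    -- column propagation: a negative factor at (i+1,j) forces a negative factor at (1,j)
    have colA : ∀ i j, 1 ≤ j → j ≤ μ (i + 1) → f (i + 1, j) < 0 → f (1, j) < 0 := by
      intro i
      induction i with
      | zero => exact fun j _ _ h => h
      | succ k ih =>
        intro j hj1 hjm hneg'
        have hjm' : j ≤ μ (k + 1) := le_trans hjm (hμ (k + 1) (k + 2) (by omega) (by omega))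
        apply ih j hj1 hjm'
        have hcol : T (k + 2, j) < T (k + 1, j) := h3 (k + 1) j (by omega) hj1 hjm
        have hT2 := (h1 (k + 2) j (by omega) hj1 hjm).1
        have hlam' : lam (T (k + 1, j)) ≤ lam (T (k + 2, j)) :=
          hlam _ _ hT2 (by omega)
        have hlam'' : (lam (T (k + 1, j)) : ℝ) ≤ (lam (T (k + 2, j)) : ℝ) := by
          exact_mod_cast hlam'
        have : f (k + 1, j) < f (k + 2, j) := by
          simp only [hf]
          push_cast
          have : ((k : ℝ) + 1 - 1) / α < ((k : ℝ) + 2 - 1) / α := by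
            rw [div_lt_div_iff_of_pos_right hα]; linarith
          linarith
        linarith
    have hf1j : f (1, s.2) < 0 := by
      obtain ⟨i', hi'⟩ : ∃ i', s.1 = i' + 1 := ⟨s.1 - 1, by omega⟩
      have : f (s.1, s.2) < 0 := by
        have : s = (s.1, s.2) := rfl
        rw [← this]; exact hneg
      exact colA i' s.2 hj1 (by rw [← hi']; exact hjμ) (by rw [← hi']; exact this)
    -- row lemma in ℤ: discrete intermediate value along the first row
    have rowB : ∀ j, 1 ≤ j → j ≤ μ 1 →
        (lam (T (1, j)) : ℤ) - ((j : ℤ) - 1) < 0 →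
        ∃ j', 1 ≤ j' ∧ j' ≤ j ∧ (lam (T (1, j')) : ℤ) - ((j' : ℤ) - 1) = 0 := by
      intro j
      induction j with
      | zero => omega
      | succ k ih =>
        intro _ hkμ hneg'
        rcases Nat.eq_zero_or_pos k with hk0 | hk1
        · subst hk0
          exfalso
          have : (0 : ℤ) ≤ (lam (T (1, 1)) : ℤ) := Int.ofNat_nonneg _
          push_cast at hneg'
          omega
        · have hkμ' : k ≤ μ 1 := by omega
          have hrow := h2 1 k le_rfl hk1 hkμ
          have hT1 := (h1 1 (k + 1) le_rfl (by omega) hkμ).1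
          have hlam' : lam (T (1, k)) ≤ lam (T (1, k + 1)) := hlam _ _ hT1 hrow
          rcases eq_or_lt_of_le
              (show (lam (T (1, k)) : ℤ) - ((k : ℤ) - 1) ≤ 0 by push_cast at hneg' ⊢; omega)
            with heq | hlt
          · exact ⟨k, hk1, by omega, heq⟩
          · obtain ⟨j', hj'1, hj'2, hj'3⟩ := ih hk1 hkμ' hlt
            exact ⟨j', hj'1, by omega, hj'3⟩
    have hgneg : (lam (T (1, s.2)) : ℤ) - ((s.2 : ℤ) - 1) < 0 := by
      have : (lam (T (1, s.2)) : ℝ) - ((s.2 : ℝ) - 1) < 0 := by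
        have := hf1j
        simp only [hf] at this
        push_cast at this
        simp only [sub_self, zero_div, add_zero] at this
        linarith [this]
      exact_mod_cast this
    obtain ⟨j', hj'1, hj'2, hj'3⟩ := rowB s.2 hj1 (le_trans hjμ (hμ 1 s.1 le_rfl hi1)) hgneg
    have hj'μ : j' ≤ μ 1 := le_trans hj'2 (le_trans hjμ (hμ 1 s.1 le_rfl hi1))
    have hmem : ((1 : ℕ), j') ∈ youngBoxes μ n := by
      simp only [youngBoxes, Finset.mem_filter, Finset.mem_product, Finset.mem_Icc]
      exact ⟨⟨⟨le_rfl, le_trans hi1 hin⟩, hj'1, hj'μ⟩, hj'μ⟩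
    have hzero : f (1, j') = 0 := by
      simp only [hf]
      have : (lam (T (1, j')) : ℝ) - ((j' : ℝ) - 1) = 0 := by
        have : ((lam (T (1, j')) : ℤ) : ℝ) - (((j' : ℤ) : ℝ) - 1) = 0 := by
          exact_mod_cast congrArg (Int.cast : ℤ → ℝ) hj'3
        push_cast at this ⊢; linarith
      push_cast
      simp only [sub_self, zero_div, add_zero]
      push_cast at this
      linarith
    exact le_of_eq (Finset.prod_eq_zero hmem hzero).symm
end

section
/- Fix a real α > 0, partitions μ, ν, λ with ν ⊆ λ and |λ| = |ν| + 1, say λ_i = ν_i + 1 and λ_k = ν_k for k ≠ i. Assume for each reverse semistandard tableau T of shape μ that ψ_T(α) ≥ 0. Then ∑_{T ∈ RSSYT(μ,n)} ψ_T(α) · ( ∏_{s∈μ} (λ_{T(s)} − b(s)) − ∏_{s∈μ} (ν_{T(s)} − b(s)) ) ≥ 0, where b(i,j) = (j−1) − (i−1)/α. -/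
open Finset

/-- Discrete intermediate value theorem: an integer sequence starting nonnegative,
ending nonpositive, with downward steps of size at most 1, hits zero. -/
lemma exists_zero_of_steps (g : ℕ → ℤ) (a b : ℕ) (hab : a ≤ b)
    (h0 : 0 ≤ g a) (hb : g b ≤ 0)
    (hstep : ∀ k, a ≤ k → k < b → g k - 1 ≤ g (k + 1)) :
    ∃ k, a ≤ k ∧ k ≤ b ∧ g k = 0 := by
  obtain ⟨d, rfl⟩ : ∃ d, b = a + d := ⟨b - a, by omega⟩
  clear hab
  induction d generalizing a with
  | zero => exact ⟨a, le_rfl, by omega, by simpa using le_antisymm (by simpa using hb) h0⟩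
  | succ d ih =>
    by_cases h : g a = 0
    · exact ⟨a, le_rfl, by omega, h⟩
    · have h1 : 0 ≤ g (a + 1) := by
        have := hstep a le_rfl (by omega); omega
      have hb' : g ((a + 1) + d) ≤ 0 := by
        have : (a + 1) + d = a + (d + 1) := by omega
        rw [this]; exact hb
      obtain ⟨k, hk1, hk2, hk3⟩ := ih (a + 1) h1 hb'
          (fun k hk hk' => hstep k (by omega) (by omega))
      exact ⟨k, by omega, by omega, hk3⟩

/-- Equation (nonnegcase1eq): for `α > 0` and partitions `ν ⊆ λ` differing by a single
box (`λ_{i₀} = ν_{i₀} + 1` and `λ_k = ν_k` for `k ≠ i₀`),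
`∑_{T ∈ RSSYT(μ,n)} ψ_T(α) (∏_{s∈μ}(λ_{T(s)} − b(s)) − ∏_{s∈μ}(ν_{T(s)} − b(s))) ≥ 0`,
where `b(i,j) = (j−1) − (i−1)/α`. -/
theorem shifted_jack_eval_diff_nonneg (α : ℝ) (hα : 0 < α) (n : ℕ)
    (μ ν lam : ℕ → ℕ)
    (hμrows : ∀ k, n < k → μ k = 0)
    (hμ : ∀ k l, 1 ≤ k → k ≤ l → μ l ≤ μ k)
    (hν : ∀ k l, 1 ≤ k → k ≤ l → ν l ≤ ν k)
    (hlam : ∀ k l, 1 ≤ k → k ≤ l → lam l ≤ lam k)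
    (i₀ : ℕ) (hi₀ : 1 ≤ i₀)
    (hbox : lam i₀ = ν i₀ + 1) (hsame : ∀ k, k ≠ i₀ → lam k = ν k)
    (RSSYT : Finset ((ℕ × ℕ) → ℕ))
    (hT : ∀ T ∈ RSSYT,
      (∀ i j, 1 ≤ i → 1 ≤ j → j ≤ μ i → 1 ≤ T (i, j) ∧ T (i, j) ≤ n) ∧
      (∀ i j, 1 ≤ i → 1 ≤ j → j + 1 ≤ μ i → T (i, j + 1) ≤ T (i, j)) ∧
      (∀ i j, 1 ≤ i → 1 ≤ j → j ≤ μ (i + 1) → T (i + 1, j) < T (i, j)))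
    (ψ : ((ℕ × ℕ) → ℕ) → ℝ) (hψ : ∀ T ∈ RSSYT, 0 ≤ ψ T) :
    0 ≤ ∑ T ∈ RSSYT, ψ T *
      ((∏ s ∈ youngBoxes μ n,
          ((lam (T s) : ℝ) - (((s.2 : ℝ) - 1) - ((s.1 : ℝ) - 1) / α)))
        - ∏ s ∈ youngBoxes μ n,
          ((ν (T s) : ℝ) - (((s.2 : ℝ) - 1) - ((s.1 : ℝ) - 1) / α))) := by
  apply Finset.sum_nonneg
  intro T hTm
  obtain ⟨hrange, hrow, hcol⟩ := hT T hTm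
  apply mul_nonneg (hψ T hTm)
  have hlamν : ∀ k, ν k ≤ lam k ∧ lam k ≤ ν k + 1 := by
    intro k
    by_cases hk : k = i₀
    · subst hk; omega
    · rw [hsame k hk]; omega
  by_cases hall : ∀ s ∈ youngBoxes μ n,
      (0 : ℝ) ≤ (ν (T s) : ℝ) - (((s.2 : ℝ) - 1) - ((s.1 : ℝ) - 1) / α)
  · rw [sub_nonneg]
    apply Finset.prod_le_prod hall
    intro s hs
    have h1 : ν (T s) ≤ lam (T s) := (hlamν (T s)).1
    have h2 : (ν (T s) : ℝ) ≤ (lam (T s) : ℝ) := by exact_mod_cast h1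
    linarith
  · push_neg at hall
    obtain ⟨s₀, hs₀, hneg⟩ := hall
    obtain ⟨i, j⟩ := s₀
    have hmem : (1 ≤ i ∧ i ≤ n) ∧ (1 ≤ j ∧ j ≤ μ 1) ∧ j ≤ μ i := by
      simpa [youngBoxes, and_assoc] using hs₀
    obtain ⟨⟨hi1, hin⟩, ⟨hj1, hjμ1⟩, hjμ⟩ := hmem
    -- propagate negativity up the column to row 1
    have hcolprop : ∀ d i', 1 ≤ i' → i' + d = i →
        (ν (T (i', j)) : ℝ) - (((j : ℝ) - 1) - ((i' : ℝ) - 1) / α) < 0 := by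
      intro d
      induction d with
      | zero =>
        intro i' h1 h2
        have : i' = i := by omega
        subst this
        simpa using hneg
      | succ d ih =>
        intro i' h1 h2
        have hIH := ih (i' + 1) (by omega) (by omega)
        have hμi' : μ i ≤ μ (i' + 1) := hμ (i' + 1) i (by omega) (by omega)
        have hjμ' : j ≤ μ (i' + 1) := le_trans hjμ hμi'
        have hc : T (i' + 1, j) < T (i', j) := hcol i' j h1 hj1 hjμ'
        have h1k : 1 ≤ T (i' + 1, j) := (hrange (i' + 1) j (by omega) hj1 hjμ').1
        have hνm : ν (T (i', j)) ≤ ν (T (i' + 1, j)) :=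
          hν (T (i' + 1, j)) (T (i', j)) h1k (le_of_lt hc)
        have hνmr : (ν (T (i', j)) : ℝ) ≤ (ν (T (i' + 1, j)) : ℝ) := by exact_mod_cast hνm
        have hdiv : ((i' : ℝ) - 1) / α ≤ (((i' + 1 : ℕ) : ℝ) - 1) / α := by
          gcongr
          push_cast; linarith
        push_cast at hIH ⊢
        push_cast at hdiv
        linarith
    have hrow1 : (ν (T (1, j)) : ℝ) - (((j : ℝ) - 1) - (((1 : ℕ) : ℝ) - 1) / α) < 0 :=
      hcolprop (i - 1) 1 le_rfl (by omega)
    have hZ : (ν (T (1, j)) : ℤ) < (j : ℤ) - 1 := by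
      have h10 : (((1 : ℕ) : ℝ) - 1) / α = 0 := by norm_num
      rw [h10] at hrow1
      have : (ν (T (1, j)) : ℝ) < (j : ℝ) - 1 := by linarith
      exact_mod_cast this
    have hn1 : 1 ≤ n := le_trans hi1 hin
    -- zero factor for the ν product, in row 1
    obtain ⟨j₁, hj₁1, hj₁j, hj₁0⟩ :=
      exists_zero_of_steps (fun j' => (ν (T (1, j')) : ℤ) - ((j' : ℤ) - 1)) 1 j hj1
        (by show (0:ℤ) ≤ (ν (T (1, 1)) : ℤ) - ((1 : ℤ) - 1); omega)
        (by show (ν (T (1, j)) : ℤ) - ((j : ℤ) - 1) ≤ 0; omega)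
        (by
          intro k hk hkj
          have hk1 : k + 1 ≤ μ 1 := by omega
          have hrk : T (1, k + 1) ≤ T (1, k) := hrow 1 k le_rfl hk hk1
          have h1k : 1 ≤ T (1, k + 1) := (hrange 1 (k + 1) le_rfl (by omega) hk1).1
          have := hν (T (1, k + 1)) (T (1, k)) h1k hrk
          show (ν (T (1, k)) : ℤ) - ((k : ℤ) - 1) - 1 ≤ (ν (T (1, k + 1)) : ℤ) - (((k:ℕ) + 1 : ℤ) - 1)
          push_cast
          omega)
    have hmem₁ : ((1 : ℕ), j₁) ∈ youngBoxes μ n := by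
      simp only [youngBoxes, Finset.mem_filter, Finset.mem_product, Finset.mem_Icc]
      exact ⟨⟨⟨le_rfl, hn1⟩, hj₁1, by omega⟩, by omega⟩
    have hz₁ : (ν (T ((1 : ℕ), j₁)) : ℝ) -
        ((((((1 : ℕ), j₁) : ℕ × ℕ).2 : ℝ) - 1) - (((((1 : ℕ), j₁) : ℕ × ℕ).1 : ℝ) - 1) / α)
        = 0 := by
      simp only at hj₁0 ⊢
      have : (ν (T (1, j₁)) : ℝ) = (j₁ : ℝ) - 1 := by
        have : (ν (T (1, j₁)) : ℤ) = (j₁ : ℤ) - 1 := by omega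
        exact_mod_cast this
      rw [this]; push_cast; ring
    -- zero factor for the λ product, in row 1
    have hZlam : (lam (T (1, j)) : ℤ) ≤ (j : ℤ) - 1 := by
      have := (hlamν (T (1, j))).2
      omega
    obtain ⟨j₂, hj₂1, hj₂j, hj₂0⟩ :=
      exists_zero_of_steps (fun j' => (lam (T (1, j')) : ℤ) - ((j' : ℤ) - 1)) 1 j hj1
        (by show (0:ℤ) ≤ (lam (T (1, 1)) : ℤ) - ((1 : ℤ) - 1); omega)
        (by show (lam (T (1, j)) : ℤ) - ((j : ℤ) - 1) ≤ 0; omega)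
        (by
          intro k hk hkj
          have hk1 : k + 1 ≤ μ 1 := by omega
          have hrk : T (1, k + 1) ≤ T (1, k) := hrow 1 k le_rfl hk hk1
          have h1k : 1 ≤ T (1, k + 1) := (hrange 1 (k + 1) le_rfl (by omega) hk1).1
          have := hlam (T (1, k + 1)) (T (1, k)) h1k hrk
          show (lam (T (1, k)) : ℤ) - ((k : ℤ) - 1) - 1 ≤ (lam (T (1, k + 1)) : ℤ) - (((k:ℕ) + 1 : ℤ) - 1)
          push_cast
          omega)
    have hmem₂ : ((1 : ℕ), j₂) ∈ youngBoxes μ n := by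
      simp only [youngBoxes, Finset.mem_filter, Finset.mem_product, Finset.mem_Icc]
      exact ⟨⟨⟨le_rfl, hn1⟩, hj₂1, by omega⟩, by omega⟩
    have hz₂ : (lam (T ((1 : ℕ), j₂)) : ℝ) -
        ((((((1 : ℕ), j₂) : ℕ × ℕ).2 : ℝ) - 1) - (((((1 : ℕ), j₂) : ℕ × ℕ).1 : ℝ) - 1) / α)
        = 0 := by
      simp only at hj₂0 ⊢
      have : (lam (T (1, j₂)) : ℝ) = (j₂ : ℝ) - 1 := by
        have : (lam (T (1, j₂)) : ℤ) = (j₂ : ℤ) - 1 := by omega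
        exact_mod_cast this
      rw [this]; push_cast; ring
    rw [Finset.prod_eq_zero hmem₂ hz₂, Finset.prod_eq_zero hmem₁ hz₁]
    norm_num
end
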